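/- If λ is a partition of n with all parts distinct, then the normalizer in S_n of the standard Young subgroup S_λ is S_λ itself. -/

import Mathlib

/-- The subgroup of `S_n` preserving each fibre of a block-labelling `B : Fin n → ℕ`
(a Young subgroup when `B` labels consecutive blocks). -/
def Young (n : ℕ) (B : Fin n → ℕ) : Subgroup (Equiv.Perm (Fin n)) where
  carrier := {g | ∀ x, B (g x) = B x}
  one_mem' := fun _ => rfl
  mul_mem' := by
    intro a b ha hb x
    simpa [Equiv.Perm.mul_apply, hb x] using ha (b x)
  inv_mem' := by
    intro a ha x
    simpa using (ha (a⁻¹ x)).symm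

/-- `blockIdx n l x`: the index of the consecutive block (of sizes `l`) containing `x`. -/
def blockIdx (n : ℕ) (l : List ℕ) (x : Fin n) : ℕ :=
  (List.range l.length).countP fun j => decide ((l.take (j + 1)).sum ≤ x.1)

lemma countP_range_lt : ∀ m i : ℕ, i ≤ m →
    (List.range m).countP (fun j => decide (j < i)) = i := by
  intro m
  induction m with
  | zero => intro i hi; simp [Nat.le_zero.mp hi]
  | succ m ih =>
    intro i hi
    rw [List.range_succ, List.countP_append]
    rcases Nat.lt_or_ge m i with hm | hm
    · have hie : i = m + 1 := le_antisymm hi hm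
      subst hie
      have : (List.range m).countP (fun j => decide (j < m + 1)) = m := by
        conv_rhs => rw [← (List.length_range : (List.range m).length = m)]
        rw [List.countP_eq_length]
        intro a ha
        simp only [List.mem_range] at ha
        simpa using Nat.lt_succ_of_lt ha
      rw [this]; simp
    · have hnm : ¬ (m < i) := Nat.not_lt.mpr hm
      simp [ih i hm, hnm]

lemma take_sum_mono (l : List ℕ) {a b : ℕ} (h : a ≤ b) :
    (l.take a).sum ≤ (l.take b).sum := by
  have : l.take a = (l.take b).take a := by
    rw [List.take_take, Nat.min_eq_left h]
  rw [this]
  conv_rhs => rw [← List.take_append_drop a (l.take b)]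
  rw [List.sum_append]
  exact Nat.le_add_right _ _

lemma blockIdx_eq (n : ℕ) (l : List ℕ) (x : Fin n) (i : ℕ) (hi : i < l.length)
    (h1 : (l.take i).sum ≤ x.1) (h2 : x.1 < (l.take (i + 1)).sum) :
    blockIdx n l x = i := by
  unfold blockIdx
  have hcg : ∀ j ∈ List.range l.length,
      (decide ((l.take (j + 1)).sum ≤ x.1) = true ↔ decide (j < i) = true) := by
    intro j _
    simp only [decide_eq_true_eq]
    rcases Nat.lt_or_ge j i with hj | hj
    · have : (l.take (j + 1)).sum ≤ x.1 :=
        le_trans (take_sum_mono l (Nat.succ_le_of_lt hj)) h1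
      simp [this, hj]
    · have hmono : (l.take (i + 1)).sum ≤ (l.take (j + 1)).sum :=
        take_sum_mono l (by omega)
      constructor
      · intro hle; omega
      · intro hlt; omega
  rw [List.countP_congr hcg, countP_range_lt l.length i (le_of_lt hi)]

lemma exists_block : ∀ (l : List ℕ) (x : ℕ), x < l.sum →
    ∃ i, i < l.length ∧ (l.take i).sum ≤ x ∧ x < (l.take (i + 1)).sum := by
  intro l
  induction l with
  | nil => intro x hx; simp at hx
  | cons a t ih =>
    intro x hx
    rcases Nat.lt_or_ge x a with h | h
    · exact ⟨0, by simp, by simp, by simpa using h⟩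
    · have hx' : x - a < t.sum := by simp at hx; omega
      obtain ⟨i, hi, h1, h2⟩ := ih (x - a) hx'
      refine ⟨i + 1, by simpa using Nat.succ_lt_succ hi, ?_, ?_⟩
      · simp only [List.take_succ_cons, List.sum_cons]
        omega
      · simp only [List.take_succ_cons, List.sum_cons]
        omega

lemma blockIdx_spec (n : ℕ) (l : List ℕ) (hsum : l.sum = n) (x : Fin n) :
    blockIdx n l x < l.length ∧ (l.take (blockIdx n l x)).sum ≤ x.1 ∧
      x.1 < (l.take (blockIdx n l x + 1)).sum := by
  obtain ⟨i, hi, h1, h2⟩ := exists_block l x.1 (by rw [hsum]; exact x.2)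
  rw [blockIdx_eq n l x i hi h1 h2]
  exact ⟨hi, h1, h2⟩

lemma fiber_card (n : ℕ) (l : List ℕ) (hsum : l.sum = n) (i : ℕ) (hi : i < l.length) :
    (Finset.univ.filter fun x : Fin n => blockIdx n l x = i).card = l[i] := by
  have hle : (l.take (i + 1)).sum ≤ n := by
    rw [← hsum]
    conv_rhs => rw [← (List.take_length : l.take l.length = l)]
    exact take_sum_mono l (Nat.succ_le_of_lt hi)
  have hset : (Finset.univ.filter fun x : Fin n => blockIdx n l x = i)
      = Finset.univ.filter fun x : Fin n =>
          (l.take i).sum ≤ x.1 ∧ x.1 < (l.take (i + 1)).sum := by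
    ext x
    simp only [Finset.mem_filter, Finset.mem_univ, true_and]
    constructor
    · intro hx
      obtain ⟨_, h1, h2⟩ := blockIdx_spec n l hsum x
      rw [hx] at h1 h2
      exact ⟨h1, h2⟩
    · intro ⟨h1, h2⟩
      exact blockIdx_eq n l x i hi h1 h2
  rw [hset]
  have hcard : (Finset.univ.filter fun x : Fin n =>
      (l.take i).sum ≤ x.1 ∧ x.1 < (l.take (i + 1)).sum).card
      = (Finset.Ico ((l.take i).sum) ((l.take (i + 1)).sum)).card := by
    apply Finset.card_bij (fun x _ => x.1)
    · intro a ha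
      simp only [Finset.mem_filter, Finset.mem_univ, true_and] at ha
      simp [Finset.mem_Ico, ha.1, ha.2]
    · intro a _ b _ h
      exact Fin.ext h
    · intro b hb
      simp only [Finset.mem_Ico] at hb
      exact ⟨⟨b, lt_of_lt_of_le hb.2 hle⟩, by
        simp only [Finset.mem_filter, Finset.mem_univ, true_and]; exact hb, rfl⟩
  rw [hcard, Nat.card_Ico, List.sum_take_succ l i hi]
  omega

/-- If `λ` is a partition of `n` with all parts distinct, then the normaliser in `S_n`
of the standard Young subgroup `S_λ` is `S_λ` itself. -/
theorem stmt10 (n : ℕ) (l : List ℕ) (hpos : ∀ p ∈ l, 1 ≤ p)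
    (hsort : l.Pairwise (· ≥ ·)) (hnodup : l.Nodup) (hsum : l.sum = n) :
    Subgroup.normalizer (Young n (blockIdx n l) : Set (Equiv.Perm (Fin n))) = Young n (blockIdx n l) := by
  refine le_antisymm ?_ Subgroup.le_normalizer
  intro g hg
  set B := blockIdx n l with hB
  have key : ∀ h : Equiv.Perm (Fin n), h ∈ Subgroup.normalizer (Young n B : Set (Equiv.Perm (Fin n))) →
      ∀ x y : Fin n, B x = B y → B (h x) = B (h y) := by
    intro h hh x y hxy
    by_cases hxyeq : x = y
    · rw [hxyeq]
    · have hswap : Equiv.swap x y ∈ Young n B := by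
        intro z
        rcases eq_or_ne z x with rfl | hzx
        · rw [Equiv.swap_apply_left]; exact hxy.symm
        rcases eq_or_ne z y with rfl | hzy
        · rw [Equiv.swap_apply_right]; exact hxy
        · rw [Equiv.swap_apply_of_ne_of_ne hzx hzy]
      have hconj : h * Equiv.swap x y * h⁻¹ ∈ Young n B :=
        (Subgroup.mem_normalizer_iff.mp hh (Equiv.swap x y)).mp hswap
      have h2 : Equiv.swap (h x) (h y) ∈ Young n B := by
        rwa [Equiv.swap_apply_apply]
      have h3 := h2 (h x)
      rw [Equiv.swap_apply_left] at h3
      exact h3.symm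
  intro x
  obtain ⟨hj, -, -⟩ := blockIdx_spec n l hsum (g x)
  obtain ⟨hi, -, -⟩ := blockIdx_spec n l hsum x
  have hc1 : (Finset.univ.filter fun y : Fin n => B y = B x).card ≤
      (Finset.univ.filter fun z : Fin n => B z = B (g x)).card := by
    apply Finset.card_le_card_of_injOn g
    · intro y hy
      simp only [Finset.mem_coe, Finset.mem_filter, Finset.mem_univ, true_and] at hy ⊢
      exact key g hg y x hy
    · exact fun a _ b _ hab => g.injective hab
  have hc2 : (Finset.univ.filter fun z : Fin n => B z = B (g x)).card ≤
      (Finset.univ.filter fun y : Fin n => B y = B x).card := by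
    apply Finset.card_le_card_of_injOn (⇑g⁻¹)
    · intro z hz
      simp only [Finset.mem_coe, Finset.mem_filter, Finset.mem_univ, true_and] at hz ⊢
      have := key g⁻¹ ((Subgroup.normalizer (Young n B : Set (Equiv.Perm (Fin n)))).inv_mem hg) z (g x) hz
      simpa using this
    · exact fun a _ b _ hab => (Equiv.injective g⁻¹) hab
  have hcards : (Finset.univ.filter fun z : Fin n => B z = B (g x)).card =
      (Finset.univ.filter fun y : Fin n => B y = B x).card := le_antisymm hc2 hc1
  rw [fiber_card n l hsum (B (g x)) hj, fiber_card n l hsum (B x) hi] at hcards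
  exact (hnodup.getElem_inj_iff).mp hcards
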